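/- For any two boundary vertices b1, b2 ∈ B, the distance in the boundary graph is at most the distance in G: dist_BG(b1,b2) ≤ dist_G(b1,b2). Concretely, for every walk p in G from b1 to b2 there exists a walk in BG from b1 to b2 whose length (with weights wt) is at most the length of p. -/

import Mathlib

open scoped ENNReal

namespace SPQ

variable {V : Type*} {ι : Type*}

/-- The length of a walk: the sum of the weights `w` over its consecutive edges. -/
noncomputable def wlen (w : V → V → ℝ≥0∞) {G : SimpleGraph V} {u v : V} (p : G.Walk u v) : ℝ≥0∞ :=
  (p.darts.map fun d => w d.toProd.1 d.toProd.2).sum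

/-- The shortest-path distance: infimum of lengths of all walks (⊤ if none exists). -/
noncomputable def gdist (G : SimpleGraph V) (w : V → V → ℝ≥0∞) (u v : V) : ℝ≥0∞ :=
  ⨅ p : G.Walk u v, wlen w p

/-- The component `C_i`: the subgraph of `G` induced on `P ⁻¹ {i}`
(as a graph on `V`: edges of `G` with both endpoints mapped to `i` by `P`). -/
def comp (G : SimpleGraph V) (P : V → ι) (i : ι) : SimpleGraph V where
  Adj u v := G.Adj u v ∧ P u = i ∧ P v = i
  symm := ⟨fun _ _ h => ⟨h.1.symm, h.2.2, h.2.1⟩⟩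
  loopless := ⟨fun _ h => G.irrefl h.1⟩

/-- The boundary `B(C_i)`: vertices of component `i` having a `G`-neighbor
in a different component. -/
def bdry (G : SimpleGraph V) (P : V → ι) (i : ι) : Set V :=
  {v | P v = i ∧ ∃ u, G.Adj v u ∧ P u ≠ i}

/-- The set `B` of all boundary vertices. -/
def bdryAll (G : SimpleGraph V) (P : V → ι) : Set V :=
  ⋃ i, bdry G P i

/-- The boundary graph `BG`: distinct boundary vertices `b1, b2` are adjacent
iff `P b1 = P b2` or `G.Adj b1 b2`. -/
def BGraph (G : SimpleGraph V) (P : V → ι) : SimpleGraph V where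
  Adj b1 b2 := b1 ≠ b2 ∧ b1 ∈ bdryAll G P ∧ b2 ∈ bdryAll G P ∧ (P b1 = P b2 ∨ G.Adj b1 b2)
  symm := by
    constructor
    intro u v h
    refine ⟨h.1.symm, h.2.2.1, h.2.1, ?_⟩
    rcases h.2.2.2 with h' | h'
    · exact Or.inl h'.symm
    · exact Or.inr h'.symm
  loopless := ⟨fun u h => h.1 rfl⟩

open Classical in
/-- The edge weight of the boundary graph:
`wt b1 b2 = dist_{C_{P b1}}(b1, b2)` if `P b1 = P b2`, and `w b1 b2` otherwise. -/
noncomputable def wt (G : SimpleGraph V) (P : V → ι) (w : V → V → ℝ≥0∞) (b1 b2 : V) : ℝ≥0∞ :=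
  if P b1 = P b2 then gdist (comp G P (P b1)) w b1 b2 else w b1 b2

lemma mem_bdryAll_of_adj {G : SimpleGraph V} {P : V → ι} {u v : V}
    (h : G.Adj u v) (hne : P u ≠ P v) : u ∈ bdryAll G P :=
  Set.mem_iUnion.2 ⟨P u, rfl, v, h, fun e => hne e.symm⟩

lemma gdist_self_eq_zero (G : SimpleGraph V) (w : V → V → ℝ≥0∞) (u : V) :
    gdist G w u u = 0 :=
  le_antisymm (iInf_le_of_le SimpleGraph.Walk.nil (by simp [wlen])) zero_le

lemma wlen_cons (w : V → V → ℝ≥0∞) {G : SimpleGraph V} {u v x : V}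
    (h : G.Adj u v) (p : G.Walk v x) :
    wlen w (SimpleGraph.Walk.cons h p) = w u v + wlen w p := by
  simp [wlen]

lemma key {V : Type*} {ι : Type*} (G : SimpleGraph V) (P : V → ι) (w : V → V → ℝ≥0∞)
    {u b2 : V} (p : G.Walk u b2) : b2 ∈ bdryAll G P →
    ∃ b ∈ bdryAll G P, P b = P u ∧ ∃ q : (BGraph G P).Walk b b2,
      gdist (comp G P (P u)) w u b + wlen (wt G P w) q ≤ wlen w p := by
  induction p with
  | nil =>
    intro hb2
    exact ⟨_, hb2, rfl, SimpleGraph.Walk.nil, by simp [gdist_self_eq_zero, wlen]⟩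
  | @cons u v _ h p ih =>
    intro hb2
    obtain ⟨b, hbB, hPb, q, hq⟩ := ih hb2
    rw [wlen_cons]
    by_cases hP : P u = P v
    · refine ⟨b, hbB, hPb.trans hP.symm, q, ?_⟩
      have step : gdist (comp G P (P u)) w u b ≤ w u v + gdist (comp G P (P u)) w v b := by
        conv_rhs => rw [gdist]
        rw [ENNReal.add_iInf]
        exact le_iInf fun r => iInf_le_of_le (SimpleGraph.Walk.cons ⟨h, rfl, hP.symm⟩ r)
          (le_of_eq (wlen_cons _ _ _))
      calc gdist (comp G P (P u)) w u b + wlen (wt G P w) q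
          ≤ w u v + (gdist (comp G P (P u)) w v b + wlen (wt G P w) q) := by
            rw [← add_assoc]; exact add_le_add_left step _
        _ ≤ w u v + wlen w p := by rw [hP]; exact add_le_add_right hq _
    · have huB : u ∈ bdryAll G P := mem_bdryAll_of_adj h hP
      have hvB : v ∈ bdryAll G P := mem_bdryAll_of_adj h.symm fun e => hP e.symm
      have auv : (BGraph G P).Adj u v := ⟨h.ne, huB, hvB, Or.inr h⟩
      have hwt : wt G P w u v = w u v := if_neg hP
      by_cases hvb : v = b
      · subst hvb
        refine ⟨u, huB, rfl, SimpleGraph.Walk.cons auv q, ?_⟩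
        rw [gdist_self_eq_zero, zero_add, wlen_cons, hwt]
        exact add_le_add_right (le_trans le_add_self hq) _
      · have avb : (BGraph G P).Adj v b := ⟨Ne.intro hvb, hvB, hbB, Or.inl hPb.symm⟩
        refine ⟨u, huB, rfl, SimpleGraph.Walk.cons auv (SimpleGraph.Walk.cons avb q), ?_⟩
        rw [gdist_self_eq_zero, zero_add, wlen_cons, wlen_cons, hwt]
        have hwt2 : wt G P w v b = gdist (comp G P (P v)) w v b := if_pos hPb.symm
        rw [hwt2]
        exact add_le_add_right hq _

/-- For any two boundary vertices `b1, b2 ∈ B`, the distance in the boundary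
graph is at most the distance in `G`: `dist_BG(b1,b2) ≤ dist_G(b1,b2)`. Concretely, for
every walk `p` in `G` from `b1` to `b2` there exists a walk in `BG` from `b1` to `b2`
whose length (with weights `wt`) is at most the length of `p`. -/
theorem stmt2 {V : Type*} {ι : Type*} [Fintype V] [Fintype ι]
    (G : SimpleGraph V) (w : V → V → ℝ≥0∞)
    (hsymm : ∀ u v, w u v = w v u) (hfin : ∀ u v, G.Adj u v → w u v < ⊤)
    (P : V → ι) (b1 b2 : V)
    (hb1 : b1 ∈ bdryAll G P) (hb2 : b2 ∈ bdryAll G P) :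
    gdist (BGraph G P) (wt G P w) b1 b2 ≤ gdist G w b1 b2 ∧
    ∀ p : G.Walk b1 b2, ∃ q : (BGraph G P).Walk b1 b2,
      wlen (wt G P w) q ≤ wlen w p := by
  have main : ∀ p : G.Walk b1 b2, ∃ q : (BGraph G P).Walk b1 b2,
      wlen (wt G P w) q ≤ wlen w p := by
    intro p
    obtain ⟨b, hbB, hPb, q, hq⟩ := key G P w p hb2
    by_cases hb : b1 = b
    · subst hb
      exact ⟨q, le_trans le_add_self hq⟩
    · have a1 : (BGraph G P).Adj b1 b := ⟨hb, hb1, hbB, Or.inl hPb.symm⟩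
      refine ⟨SimpleGraph.Walk.cons a1 q, ?_⟩
      rw [wlen_cons]
      have : wt G P w b1 b = gdist (comp G P (P b1)) w b1 b := if_pos hPb.symm
      rw [this]
      exact hq
  refine ⟨?_, main⟩
  simp only [gdist]
  refine le_iInf fun p => ?_
  obtain ⟨q, hq⟩ := main p
  exact le_trans (iInf_le _ q) hq

end SPQ
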